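/- arXiv:1606.01564 — 4 statements merged into one kernel-verified Lean document; each statement's English description precedes it below -/
import Mathlib

section
/- Let b > 0, let V : ℝ → ℝ be continuous on [0, b], let z ∈ ℂ with Im z > 0, and let u : ℝ → ℂ be twice continuously differentiable on [0, b] with u''(t) = (V(t) − z)·u(t) for all t ∈ [0, b], u(0) = 1, u'(0) = 0. Then |u(b) + i·u'(b)|² − |u(b) − i·u'(b)|² = 4·(Im z)·∫₀ᵇ |u(t)|² dt, and this quantity is strictly positive. -/
/-- For a solution of `u'' = (V − z)u` on `[0, b]` with `u(0) = 1`, `u'(0) = 0` and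
`Im z > 0`: `|u(b) + iu'(b)|² − |u(b) − iu'(b)|² = 4·(Im z)·∫₀ᵇ |u(t)|² dt > 0`. -/
theorem schroedinger_deBranges_positivity (b : ℝ) (hb : 0 < b) (V : ℝ → ℝ)
    (hV : ContinuousOn V (Set.Icc 0 b)) (z : ℂ) (hz : 0 < z.im)
    (u u' u'' : ℝ → ℂ)
    (hu1 : ∀ t ∈ Set.Icc (0 : ℝ) b, HasDerivAt u (u' t) t)
    (hu2 : ∀ t ∈ Set.Icc (0 : ℝ) b, HasDerivAt u' (u'' t) t)
    (hu3 : ContinuousOn u'' (Set.Icc 0 b))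
    (hueq : ∀ t ∈ Set.Icc (0 : ℝ) b, u'' t = ((V t : ℂ) - z) * u t)
    (hu0 : u 0 = 1) (hu'0 : u' 0 = 0) :
    (‖u b + Complex.I * u' b‖) ^ 2
        - (‖u b - Complex.I * u' b‖) ^ 2
      = 4 * z.im * ∫ t in (0 : ℝ)..b, (‖u t‖) ^ 2 ∧
    0 < (‖u b + Complex.I * u' b‖) ^ 2
        - (‖u b - Complex.I * u' b‖) ^ 2 := by
  set g : ℝ → ℝ := fun t => ((starRingEnd ℂ) (u t) * u' t).im with hg_def
  have hcu : ContinuousOn u (Set.Icc 0 b) := fun t ht =>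
    (hu1 t ht).continuousAt.continuousWithinAt
  have hf_cont : ContinuousOn (fun t => (‖u t‖) ^ 2) (Set.Icc 0 b) := by
    exact ((continuous_norm.comp_continuousOn hcu).pow 2)
  have hgderiv : ∀ t ∈ Set.uIcc (0 : ℝ) b,
      HasDerivAt g (-z.im * (‖u t‖) ^ 2) t := by
    rw [Set.uIcc_of_le hb.le]
    intro t ht
    have h1 : HasDerivAt (fun s => (starRingEnd ℂ) (u s) * u' s)
        ((starRingEnd ℂ) (u' t) * u' t + (starRingEnd ℂ) (u t) * u'' t) t :=
      ((hu1 t ht).star.mul (hu2 t ht))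
    have h2 := Complex.imCLM.hasFDerivAt.comp_hasDerivAt t h1
    have key : ((starRingEnd ℂ) (u' t) * u' t + (starRingEnd ℂ) (u t) * u'' t).im
        = -z.im * (‖u t‖) ^ 2 := by
      rw [hueq t ht]
      have e1 : (starRingEnd ℂ) (u' t) * u' t = (‖u' t‖ : ℂ) ^ 2 := by
        rw [Complex.conj_mul']
      have e2 : (starRingEnd ℂ) (u t) * (((V t : ℂ) - z) * u t)
          = ((V t : ℂ) - z) * (‖u t‖ : ℂ) ^ 2 := by
        rw [show (starRingEnd ℂ) (u t) * (((V t : ℂ) - z) * u t)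
            = ((V t : ℂ) - z) * ((starRingEnd ℂ) (u t) * u t) by ring,
          Complex.conj_mul']
      rw [e1, e2]
      simp [Complex.add_im, Complex.mul_im, Complex.sub_im, Complex.sub_re,
        ← Complex.ofReal_pow]
    rw [← key]
    exact h2
  have hint : IntervalIntegrable (fun t => -z.im * (‖u t‖) ^ 2)
      MeasureTheory.volume 0 b := by
    apply ContinuousOn.intervalIntegrable
    rw [Set.uIcc_of_le hb.le]
    exact (continuousOn_const.mul hf_cont)
  have hFTC := intervalIntegral.integral_eq_sub_of_hasDerivAt hgderiv hint
  have hg0 : g 0 = 0 := by simp [hg_def, hu0, hu'0]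
  have hgb : g b = -z.im * ∫ t in (0:ℝ)..b, (‖u t‖) ^ 2 := by
    rw [intervalIntegral.integral_const_mul] at hFTC
    rw [hg0, sub_zero] at hFTC
    linarith [hFTC]
  have hmain : (‖u b + Complex.I * u' b‖) ^ 2
      - (‖u b - Complex.I * u' b‖) ^ 2 = -4 * g b := by
    rw [Complex.sq_norm, Complex.sq_norm]
    simp only [hg_def, Complex.normSq_apply, Complex.add_re, Complex.add_im,
      Complex.sub_re, Complex.sub_im, Complex.mul_re, Complex.mul_im, Complex.I_re,
      Complex.I_im, Complex.conj_re, Complex.conj_im]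
    ring
  have hintpos : 0 < ∫ t in (0:ℝ)..b, (‖u t‖) ^ 2 := by
    -- f 0 = 1, continuity gives a small interval where f ≥ 1/2
    have hf0 : (‖u 0‖) ^ 2 = 1 := by simp [hu0]
    have hct : ContinuousWithinAt (fun t => (‖u t‖) ^ 2) (Set.Icc 0 b) 0 :=
      hf_cont 0 ⟨le_refl 0, hb.le⟩
    have hev : ∀ᶠ t in nhdsWithin 0 (Set.Icc 0 b),
        (1:ℝ)/2 < (‖u t‖) ^ 2 := by
      apply hct.eventually (p := fun x => (1:ℝ)/2 < x)
      simp only [hf0]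
      exact eventually_gt_nhds (by norm_num)
    rw [Filter.eventually_iff, Metric.mem_nhdsWithin_iff] at hev
    obtain ⟨ε, hε, hball⟩ := hev
    set δ := min (ε/2) b with hδdef
    have hδ0 : 0 < δ := lt_min (by linarith) hb
    have hδb : δ ≤ b := min_le_right _ _
    have hhalf : ∀ t ∈ Set.Icc 0 δ, (1:ℝ)/2 ≤ (‖u t‖) ^ 2 := by
      intro t ⟨ht0, htδ⟩
      have : dist t 0 < ε := by
        rw [Real.dist_eq, sub_zero, abs_of_nonneg ht0]
        calc t ≤ δ := htδ
          _ ≤ ε/2 := min_le_left _ _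
          _ < ε := by linarith
      exact le_of_lt (hball ⟨Metric.mem_ball.mpr this, ⟨ht0, le_trans htδ hδb⟩⟩)
    have hi1 : IntervalIntegrable (fun t => (‖u t‖) ^ 2)
        MeasureTheory.volume 0 δ := by
      apply ContinuousOn.intervalIntegrable
      rw [Set.uIcc_of_le hδ0.le]
      exact hf_cont.mono (Set.Icc_subset_Icc_right hδb)
    have hi2 : IntervalIntegrable (fun t => (‖u t‖) ^ 2)
        MeasureTheory.volume δ b := by
      apply ContinuousOn.intervalIntegrable
      rw [Set.uIcc_of_le hδb]
      exact hf_cont.mono (Set.Icc_subset_Icc_left hδ0.le)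
    have h1 : δ/2 ≤ ∫ t in (0:ℝ)..δ, (‖u t‖) ^ 2 := by
      have := intervalIntegral.integral_mono_on hδ0.le
        (intervalIntegrable_const (c := (1:ℝ)/2)) hi1 hhalf
      simpa [div_eq_mul_inv] using this
    have h2 : (0:ℝ) ≤ ∫ t in δ..b, (‖u t‖) ^ 2 := by
      apply intervalIntegral.integral_nonneg hδb
      intro t _; positivity
    have hsplit : ∫ t in (0:ℝ)..b, (‖u t‖) ^ 2
        = (∫ t in (0:ℝ)..δ, (‖u t‖) ^ 2)
          + ∫ t in δ..b, (‖u t‖) ^ 2 :=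
      (intervalIntegral.integral_add_adjacent_intervals hi1 hi2).symm
    rw [hsplit]; linarith
  constructor
  · rw [hmain, hgb]; ring
  · rw [hmain, hgb]
    have : 0 < z.im * ∫ t in (0:ℝ)..b, (‖u t‖) ^ 2 :=
      mul_pos hz hintpos
    linarith
end

section
/- Let b > 0, let V : ℝ → ℝ be continuous on [0, b], let z, w ∈ ℂ with z ≠ conj(w), and let u, v : ℝ → ℂ be twice continuously differentiable on [0, b] with u''(t) = (V(t) − z)·u(t) and v''(t) = (V(t) − w)·v(t) for all t ∈ [0, b], and u(0) = v(0) = 1, u'(0) = v'(0) = 0. Then ((u(b) + i·u'(b))·conj(v(b) + i·v'(b)) − (u(b) − i·u'(b))·conj(v(b) − i·v'(b))) / (−2i·(z − conj(w))) = ∫₀ᵇ u(t)·conj(v(t)) dt. -/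
/-- Christoffel–Darboux-type formula for the reproducing kernel of the de Branges space
associated with the Schrödinger equation: with `E_b(λ) = φ_λ(b) + iφ'_λ(b)`, the kernel
numerator over `−2i(z − conj w)` equals `∫₀ᵇ φ_z(t)·conj(φ_w(t)) dt`. -/
theorem schroedinger_kernel_formula (b : ℝ) (hb : 0 < b) (V : ℝ → ℝ)
    (hV : ContinuousOn V (Set.Icc 0 b)) (z w : ℂ) (hzw : z ≠ (starRingEnd ℂ) w)
    (u v u' v' u'' v'' : ℝ → ℂ)
    (hu1 : ∀ t ∈ Set.Icc (0 : ℝ) b, HasDerivAt u (u' t) t)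
    (hu2 : ∀ t ∈ Set.Icc (0 : ℝ) b, HasDerivAt u' (u'' t) t)
    (hu3 : ContinuousOn u'' (Set.Icc 0 b))
    (hv1 : ∀ t ∈ Set.Icc (0 : ℝ) b, HasDerivAt v (v' t) t)
    (hv2 : ∀ t ∈ Set.Icc (0 : ℝ) b, HasDerivAt v' (v'' t) t)
    (hv3 : ContinuousOn v'' (Set.Icc 0 b))
    (hueq : ∀ t ∈ Set.Icc (0 : ℝ) b, u'' t = ((V t : ℂ) - z) * u t)
    (hveq : ∀ t ∈ Set.Icc (0 : ℝ) b, v'' t = ((V t : ℂ) - w) * v t)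
    (hu0 : u 0 = 1) (hv0 : v 0 = 1) (hu'0 : u' 0 = 0) (hv'0 : v' 0 = 0) :
    ((u b + Complex.I * u' b) * (starRingEnd ℂ) (v b + Complex.I * v' b)
        - (u b - Complex.I * u' b) * (starRingEnd ℂ) (v b - Complex.I * v' b))
      / (-2 * Complex.I * (z - (starRingEnd ℂ) w))
      = ∫ t in (0 : ℝ)..b, u t * (starRingEnd ℂ) (v t) := by
  set c : ℂ := z - (starRingEnd ℂ) w with hc
  have hcne : c ≠ 0 := sub_ne_zero.mpr hzw
  -- Wronskian-type function
  set g : ℝ → ℂ := fun t => u t * (starRingEnd ℂ) (v' t) - u' t * (starRingEnd ℂ) (v t)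
    with hg
  have hIcc : Set.uIcc (0 : ℝ) b = Set.Icc 0 b := Set.uIcc_of_le hb.le
  have hderiv : ∀ t ∈ Set.uIcc (0 : ℝ) b, HasDerivAt g (c * (u t * (starRingEnd ℂ) (v t))) t := by
    rw [hIcc]
    intro t ht
    have h1 : HasDerivAt (fun s => (starRingEnd ℂ) (v s)) ((starRingEnd ℂ) (v' t)) t :=
      (hv1 t ht).star
    have h2 : HasDerivAt (fun s => (starRingEnd ℂ) (v' s)) ((starRingEnd ℂ) (v'' t)) t :=
      (hv2 t ht).star
    have h := (((hu1 t ht).mul h2)).sub ((hu2 t ht).mul h1)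
    convert h using 1
    case e'_4 => rfl
    case e'_8 => rfl
    have h3 : (starRingEnd ℂ) (v'' t) = ((V t : ℂ) - (starRingEnd ℂ) w) * (starRingEnd ℂ) (v t) := by
      rw [hveq t ht, map_mul, map_sub, Complex.conj_ofReal]
    rw [h3, hueq t ht]
    ring
  have hcont : ContinuousOn (fun t => c * (u t * (starRingEnd ℂ) (v t))) (Set.Icc 0 b) := by
    have hu : ContinuousOn u (Set.Icc 0 b) := fun t ht => ((hu1 t ht).continuousAt).continuousWithinAt
    have hv : ContinuousOn v (Set.Icc 0 b) := fun t ht => ((hv1 t ht).continuousAt).continuousWithinAt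
    exact continuousOn_const.mul (hu.mul (Complex.continuous_conj.comp_continuousOn hv))
  have hFTC := intervalIntegral.integral_eq_sub_of_hasDerivAt hderiv
    ((hcont.intervalIntegrable_of_Icc hb.le))
  have hint : (∫ t in (0:ℝ)..b, c * (u t * (starRingEnd ℂ) (v t))) = g b - g 0 := hFTC
  rw [intervalIntegral.integral_const_mul] at hint
  have hg0 : g 0 = 0 := by simp [hg, hu0, hv0, hu'0, hv'0]
  rw [hg0, sub_zero] at hint
  have hintval : (∫ t in (0:ℝ)..b, u t * (starRingEnd ℂ) (v t)) = g b / c := by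
    field_simp
    rw [mul_comm]
    exact hint
  rw [hintval, hg]
  simp only [map_add, map_sub, map_mul, Complex.conj_I]
  have hI : Complex.I ≠ 0 := Complex.I_ne_zero
  field_simp
  ring
end

section
/- Let E be a de Branges function with no zeros on the real axis, let φ : ℝ → ℝ be a continuous function such that E(x)·exp(i·φ(x)) is real for every x ∈ ℝ, and let x₀ ∈ ℝ be a point at which φ is differentiable. Then φ'(x₀) equals the derivative at y = 0 of the function y ↦ log |E(x₀ + iy)|. -/
open Complex Filter Topology Real

/-- For a de Branges function `E` with no real zeros and a continuous phase function `φ`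
(i.e. `E(x)·exp(iφ(x))` is real for all real `x`), at any point `x₀` of differentiability
of `φ`, `φ'(x₀)` equals the derivative at `y = 0` of `y ↦ log |E(x₀ + iy)|`. -/
theorem phase_derivative_eq_log_modulus_derivative (E : ℂ → ℂ) (hE : Differentiable ℂ E)
    (hdB : ∀ z : ℂ, 0 < z.im →
      ‖(starRingEnd ℂ) (E ((starRingEnd ℂ) z))‖ < ‖E z‖)
    (hnz : ∀ x : ℝ, E (x : ℂ) ≠ 0)
    (φ : ℝ → ℝ) (hφ : Continuous φ)
    (hreal : ∀ x : ℝ, (E (x : ℂ) * Complex.exp (Complex.I * (φ x : ℂ))).im = 0)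
    (x₀ : ℝ) (hdiff : DifferentiableAt ℝ φ x₀) :
    deriv φ x₀ = deriv (fun y : ℝ => Real.log ‖E (x₀ + y * Complex.I)‖) 0 := by
  set w : ℂ := E (x₀ : ℂ) with hw
  have hw0 : w ≠ 0 := hnz x₀
  set g : ℂ → ℂ := fun z => Complex.log (E z / w) with hgdef
  set c : ℂ := deriv E (x₀ : ℂ) / w with hcdef
  have hF1 : E (x₀ : ℂ) / w = 1 := div_self hw0
  -- slit plane membership near x₀
  have hslit : ∀ᶠ z in 𝓝 (x₀ : ℂ), E z / w ∈ Complex.slitPlane := by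
    have hcont : ContinuousAt (fun z => E z / w) (x₀ : ℂ) :=
      (hE.continuous.continuousAt).div_const _
    exact hcont.eventually_mem (Complex.isOpen_slitPlane.mem_nhds
      (by rw [hF1]; exact Complex.one_mem_slitPlane))
  -- g has derivative c at x₀
  have hgd : HasDerivAt g c (x₀ : ℂ) := by
    have hEd : HasDerivAt (fun z => E z / w) (deriv E (x₀ : ℂ) / w) (x₀ : ℂ) :=
      ((hE (x₀ : ℂ)).hasDerivAt).div_const w
    have := hEd.clog (by rw [hF1]; exact Complex.one_mem_slitPlane)
    simpa [hF1, hcdef] using this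
  -- local exponential representation
  have hEgz : ∀ z : ℂ, E z / w ∈ Complex.slitPlane → E z = w * Complex.exp (g z) := by
    intro z hz
    have hz0 : E z / w ≠ 0 := Complex.slitPlane_ne_zero hz
    rw [hgdef]
    simp only
    rw [Complex.exp_log hz0]
    field_simp
  -- log-modulus identity
  have hlog : ∀ z : ℂ, E z / w ∈ Complex.slitPlane →
      Real.log ‖E z‖ = Real.log ‖w‖ + (g z).re := by
    intro z hz
    rw [hEgz z hz, norm_mul, Complex.norm_exp,
      Real.log_mul ((norm_ne_zero_iff.mpr hw0)) (Real.exp_ne_zero _), Real.log_exp]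
  -- phase condition: sin vanishes
  have hsin : ∀ x : ℝ, E (x : ℂ) / w ∈ Complex.slitPlane →
      ∃ n : ℤ, (n : ℝ) * π = (g (x : ℂ)).im + (Complex.arg w + φ x) := by
    intro x hx
    have h0 := hreal x
    have key : E (x : ℂ) * Complex.exp (Complex.I * (φ x : ℂ))
        = (‖w‖ : ℂ) *
          Complex.exp (g (x : ℂ) + ((Complex.arg w : ℂ) + (φ x : ℂ)) * Complex.I) := by
      rw [hEgz (x : ℂ) hx]
      nth_rewrite 1 [← Complex.norm_mul_exp_arg_mul_I w]
      rw [mul_assoc, mul_assoc, ← Complex.exp_add, ← Complex.exp_add]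
      congr 1
      ring
    rw [key] at h0
    have him : ((‖w‖ : ℂ) *
        Complex.exp (g (x : ℂ) + ((Complex.arg w : ℂ) + (φ x : ℂ)) * Complex.I)).im
        = ‖w‖ * (Real.exp ((g (x : ℂ)).re) *
          Real.sin ((g (x : ℂ)).im + (Complex.arg w + φ x))) := by
      simp [Complex.mul_im, Complex.mul_re, Complex.exp_im, Complex.exp_re,
        Complex.add_re, Complex.add_im]
    rw [him] at h0
    have habs : ‖w‖ ≠ 0 := norm_ne_zero_iff.mpr hw0
    have hs : Real.sin ((g (x : ℂ)).im + (Complex.arg w + φ x)) = 0 := by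
      have := mul_eq_zero.mp h0
      rcases this with h | h
      · exact absurd h habs
      · rcases mul_eq_zero.mp h with h' | h'
        · exact absurd h' (Real.exp_ne_zero _)
        · exact h'
    exact Real.sin_eq_zero_iff.mp hs
  -- ε is continuous at x₀ and eventually equal to a (fixed) integer multiple of π
  set ε : ℝ → ℝ := fun x => (g (x : ℂ)).im + (Complex.arg w + φ x) with hεdef
  have hgc : ContinuousAt (fun x : ℝ => (g (x : ℂ)).im) x₀ := by
    have : ContinuousAt g (x₀ : ℂ) := hgd.differentiableAt.continuousAt
    exact Complex.continuous_im.continuousAt.comp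
      (this.comp Complex.continuous_ofReal.continuousAt)
  have hεc : ContinuousAt ε x₀ := hgc.add (continuousAt_const.add hφ.continuousAt)
  have hslitR : ∀ᶠ x : ℝ in 𝓝 x₀, E (x : ℂ) / w ∈ Complex.slitPlane :=
    (Complex.continuous_ofReal.tendsto x₀).eventually hslit
  have hclose : ∀ᶠ x : ℝ in 𝓝 x₀, |ε x - ε x₀| < π := by
    have := hεc (Metric.ball_mem_nhds (ε x₀) Real.pi_pos)
    filter_upwards [this] with x hx
    simpa [Real.dist_eq] using hx
  have hconst : ∀ᶠ x : ℝ in 𝓝 x₀, ε x = ε x₀ := by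
    filter_upwards [hslitR, hclose] with x hx hcl
    obtain ⟨n, hn⟩ := hsin x hx
    obtain ⟨m, hm⟩ := hsin x₀ hslitR.self_of_nhds
    have hnm : n = m := by
      have h1 : |(n : ℝ) - m| * π < π := by
        calc |(n : ℝ) - m| * π = |(n : ℝ) * π - m * π| := by
              rw [← sub_mul, abs_mul, abs_of_pos Real.pi_pos]
          _ = |ε x - ε x₀| := by rw [hn, hm]
          _ < π := hcl
      have h2 : |(n : ℝ) - m| < 1 := by
        by_contra h
        push_neg at h
        nlinarith [Real.pi_pos]
      have h3 : |(n - m : ℤ)| < 1 := by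
        have : |((n - m : ℤ) : ℝ)| < 1 := by push_cast; exact h2
        exact_mod_cast this
      rw [abs_lt] at h3
      omega
    show (g (x : ℂ)).im + (Complex.arg w + φ x) = (g (x₀ : ℂ)).im + (Complex.arg w + φ x₀)
    rw [← hn, ← hm, hnm]
  -- LHS: φ eventually equals x ↦ (ε x₀ - arg w) - Im (g x)
  have hφeq : φ =ᶠ[𝓝 x₀] fun x => (fun z : ℂ =>
      ((ε x₀ - Complex.arg w : ℝ) : ℂ) + Complex.I * g z) (x : ℂ) |>.re := by
    filter_upwards [hconst] with x hx
    have : φ x = ε x₀ - Complex.arg w - (g (x : ℂ)).im := by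
      rw [← hx, hεdef]; simp; ring
    rw [this]
    simp [Complex.add_re, Complex.mul_re]
    ring
  have hL : HasDerivAt (fun x : ℝ => ((fun z : ℂ =>
      ((ε x₀ - Complex.arg w : ℝ) : ℂ) + Complex.I * g z) (x : ℂ)).re) (-c.im) x₀ := by
    have h1 : HasDerivAt (fun z : ℂ =>
        ((ε x₀ - Complex.arg w : ℝ) : ℂ) + Complex.I * g z) (Complex.I * c) (x₀ : ℂ) :=
      (hgd.const_mul Complex.I).const_add _
    have := h1.real_of_complex
    simpa using this
  -- RHS: log |E(x₀+yI)| eventually equals y ↦ log|w| + Re (g (x₀+yI))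
  have hinner : ∀ z : ℂ, HasDerivAt (fun t : ℂ => (x₀ : ℂ) + t * Complex.I) Complex.I z := by
    intro z
    simpa using ((hasDerivAt_id z).mul_const Complex.I).const_add (x₀ : ℂ)
  have hslitI : ∀ᶠ y : ℝ in 𝓝 0, E ((x₀ : ℂ) + (y : ℂ) * Complex.I) / w ∈ Complex.slitPlane := by
    have hcont : Continuous (fun y : ℝ => (x₀ : ℂ) + (y : ℂ) * Complex.I) :=
      continuous_const.add (Complex.continuous_ofReal.mul continuous_const)
    have : Tendsto (fun y : ℝ => (x₀ : ℂ) + (y : ℂ) * Complex.I) (𝓝 0) (𝓝 ((x₀ : ℂ))) := by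
      have := hcont.tendsto 0
      simpa using this
    exact this.eventually hslit
  have hReq : (fun y : ℝ => Real.log ‖E ((x₀ : ℂ) + (y : ℂ) * Complex.I)‖)
      =ᶠ[𝓝 (0 : ℝ)] fun y => ((fun z : ℂ =>
        ((Real.log ‖w‖ : ℝ) : ℂ) + g ((x₀ : ℂ) + z * Complex.I)) (y : ℂ)).re := by
    filter_upwards [hslitI] with y hy
    rw [hlog _ hy]
    simp
  have hR : HasDerivAt (fun y : ℝ => ((fun z : ℂ =>
      ((Real.log ‖w‖ : ℝ) : ℂ) + g ((x₀ : ℂ) + z * Complex.I)) (y : ℂ)).re)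
      (-c.im) 0 := by
    have h1 : HasDerivAt (fun z : ℂ =>
        ((Real.log ‖w‖ : ℝ) : ℂ) + g ((x₀ : ℂ) + z * Complex.I))
        (c * Complex.I) (0 : ℂ) := by
      have h2 : HasDerivAt (fun z : ℂ => g ((x₀ : ℂ) + z * Complex.I)) (c * Complex.I) (0 : ℂ) := by
        have hgd' : HasDerivAt g c ((fun t : ℂ => (x₀ : ℂ) + t * Complex.I) 0) := by
          simpa using hgd
        have := hgd'.comp (0 : ℂ) (hinner 0)
        exact this
      exact h2.const_add _
    have h1' : HasDerivAt (fun z : ℂ =>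
        ((Real.log ‖w‖ : ℝ) : ℂ) + g ((x₀ : ℂ) + z * Complex.I))
        (c * Complex.I) ((0 : ℝ) : ℂ) := by simpa using h1
    have := h1'.real_of_complex
    simpa [Complex.mul_re] using this
  rw [hφeq.deriv_eq, hL.deriv, hReq.deriv_eq, hR.deriv]
end

section
/- Let E be a de Branges function with no zeros on the real axis. Then for every real x, the derivative at y = 0 of the function y ↦ |E(x + iy)|² is strictly positive. -/
open Complex Metric Set Filter
open scoped Topology

private lemma conj_comp_hasDerivAt {f : ℂ → ℂ} {f' : ℂ} (z : ℂ)
    (hf : HasDerivAt f f' ((starRingEnd ℂ) z)) :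
    HasDerivAt (fun w => (starRingEnd ℂ) (f ((starRingEnd ℂ) w))) ((starRingEnd ℂ) f') z := by
  rw [hasDerivAt_iff_isLittleO] at hf ⊢
  have hc : Filter.Tendsto (fun w : ℂ => (starRingEnd ℂ) w) (𝓝 z) (𝓝 ((starRingEnd ℂ) z)) :=
    (Complex.continuous_conj.tendsto z)
  have h2 := hf.comp_tendsto hc
  rw [Asymptotics.isLittleO_iff] at h2 ⊢
  intro c hc'
  filter_upwards [h2 hc'] with w hw
  have e1 : (starRingEnd ℂ) (f ((starRingEnd ℂ) w)) - (starRingEnd ℂ) (f ((starRingEnd ℂ) z))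
      - (w - z) • (starRingEnd ℂ) f'
      = (starRingEnd ℂ) (f ((starRingEnd ℂ) w) - f ((starRingEnd ℂ) z)
        - ((starRingEnd ℂ) w - (starRingEnd ℂ) z) • f') := by
    simp only [map_sub, smul_eq_mul, map_mul, Complex.conj_conj]
  rw [e1, RCLike.norm_conj]
  have e2 : ‖w - z‖ = ‖(starRingEnd ℂ) w - (starRingEnd ℂ) z‖ := by
    rw [← map_sub, RCLike.norm_conj]
  rw [e2]
  exact hw

private lemma normSq_moebius_identity (a u v : ℂ) :
    Complex.normSq (u - (starRingEnd ℂ) a * v) - Complex.normSq (v - a * u)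
      = (1 - Complex.normSq a) * (Complex.normSq u - Complex.normSq v) := by
  simp only [Complex.normSq_apply, Complex.sub_re, Complex.sub_im, Complex.mul_re,
    Complex.mul_im, Complex.conj_re, Complex.conj_im, Complex.one_re, Complex.one_im]
  ring

/-- For a de Branges function `E` with no real zeros, the derivative at `y = 0` of
`y ↦ |E(x + iy)|²` is strictly positive for every real `x`. -/
theorem deBranges_modulus_sq_deriv_pos (E : ℂ → ℂ) (hE : Differentiable ℂ E)
    (hdB : ∀ z : ℂ, 0 < z.im →
      ‖(starRingEnd ℂ) (E ((starRingEnd ℂ) z))‖ < ‖E z‖)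
    (hnz : ∀ x : ℝ, E (x : ℂ) ≠ 0) :
    ∀ x : ℝ, 0 < deriv (fun y : ℝ => (‖E (x + y * Complex.I)‖) ^ 2) 0 := by
  intro x
  -- the conjugated function E♯
  set Eh : ℂ → ℂ := fun z => (starRingEnd ℂ) (E ((starRingEnd ℂ) z)) with hEh_def
  have hEh : Differentiable ℂ Eh := fun z =>
    (conj_comp_hasDerivAt z (hE _).hasDerivAt).differentiableAt
  -- E has no zeros in the upper half plane
  have hUnz : ∀ z : ℂ, 0 < z.im → E z ≠ 0 := by
    intro z hz h0
    have h1 := hdB z hz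
    rw [h0] at h1
    simp only [map_zero, norm_zero] at h1
    exact (norm_nonneg _).not_gt h1
  -- the base point w = x + i and the value a
  set w : ℂ := (x : ℂ) + Complex.I with hw_def
  have hwim : (0 : ℝ) < w.im := by simp [hw_def]
  have hEw : E w ≠ 0 := hUnz w hwim
  set a : ℂ := Eh w / E w with ha_def
  set t : ℝ := ‖a‖ with ht_def
  have ht0 : 0 ≤ t := norm_nonneg a
  have ht1 : t < 1 := by
    rw [ht_def, ha_def, norm_div, div_lt_one (norm_pos_iff.mpr hEw)]
    exact hdB w hwim
  -- abbreviations
  set Num : ℂ → ℂ := fun z => Eh z - a * E z with hNum_def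
  set Den : ℂ → ℂ := fun z => E z - (starRingEnd ℂ) a * Eh z with hDen_def
  -- On the upper half plane the denominator does not vanish and |Num| < |Den|
  have hDenlt : ∀ z : ℂ, 0 < z.im → ‖(starRingEnd ℂ) a * Eh z‖ < ‖E z‖ := by
    intro z hz
    have h1 : ‖(starRingEnd ℂ) a * Eh z‖ ≤ ‖Eh z‖ := by
      rw [norm_mul]
      have : ‖(starRingEnd ℂ) a‖ = t := by rw [ht_def]; exact Complex.norm_conj a
      rw [this]
      calc t * ‖Eh z‖ ≤ 1 * ‖Eh z‖ :=
            mul_le_mul_of_nonneg_right ht1.le (norm_nonneg _)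
        _ = ‖Eh z‖ := one_mul _
    exact h1.trans_lt (hdB z hz)
  have hDen_ne : ∀ z : ℂ, 0 < z.im → Den z ≠ 0 := by
    intro z hz h0
    have h1 := hDenlt z hz
    have h2 : E z = (starRingEnd ℂ) a * Eh z := by
      have := sub_eq_zero.mp h0; exact this
    rw [← h2] at h1
    exact lt_irrefl _ h1
  have hNumlt : ∀ z : ℂ, 0 < z.im →
      Complex.normSq (Num z) < Complex.normSq (Den z) := by
    intro z hz
    have hid := normSq_moebius_identity a (E z) (Eh z)
    have hQ : 0 < Complex.normSq (E z) - Complex.normSq (Eh z) := by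
      have h1 := hdB z hz
      have h2 : Complex.normSq (Eh z) < Complex.normSq (E z) := by
        rw [← Complex.sq_norm, ← Complex.sq_norm]
        exact pow_lt_pow_left₀ h1 (norm_nonneg _) two_ne_zero
      linarith
    have hA : Complex.normSq a < 1 := by
      rw [← Complex.sq_norm, ← ht_def]
      nlinarith
    have hDN : Complex.normSq (Den z) - Complex.normSq (Num z)
        = (1 - Complex.normSq a) * (Complex.normSq (E z) - Complex.normSq (Eh z)) := by
      simp only [hNum_def, hDen_def]
      exact hid
    nlinarith [mul_pos (by nlinarith : (0:ℝ) < 1 - Complex.normSq a) hQ]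
  -- the Schwarz map
  set F : ℂ → ℂ := fun z => Num z / Den z with hF_def
  have hFw : F w = 0 := by
    have : Num w = 0 := by
      rw [hNum_def, ha_def]
      field_simp
      simp
    show Num w / Den w = 0
    rw [this, zero_div]
  have hball : ∀ z : ℂ, z ∈ ball w 1 → 0 < z.im := by
    intro z hz
    rw [mem_ball, Complex.dist_eq] at hz
    have h1 : |(z - w).im| ≤ ‖z - w‖ := Complex.abs_im_le_norm _
    have h2 : (z - w).im = z.im - w.im := Complex.sub_im z w
    have h3 : w.im = 1 := by simp [hw_def]
    rw [h2, h3] at h1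
    have := abs_le.mp h1
    linarith [this.1]
  have hFdiff : DifferentiableOn ℂ F (ball w 1) := by
    apply DifferentiableOn.div
    · exact (hEh.sub (hE.const_mul a)).differentiableOn
    · exact (hE.sub (hEh.const_mul ((starRingEnd ℂ) a))).differentiableOn
    · intro z hz; exact hDen_ne z (hball z hz)
  have hFmaps : MapsTo F (ball w 1) (ball (F w) 1) := by
    rw [hFw]
    intro z hz
    rw [mem_ball, dist_zero_right, hF_def]
    have hz' := hball z hz
    rw [norm_div, div_lt_one (norm_pos_iff.mpr (hDen_ne z hz'))]
    rw [Complex.norm_def, Complex.norm_def]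
    exact Real.sqrt_lt_sqrt (Complex.normSq_nonneg _) (hNumlt z hz')
  -- the function g
  set g : ℝ → ℝ := fun y => Complex.normSq (E ((x : ℂ) + (y : ℝ) * Complex.I)) with hg_def
  have hgoal_eq : (fun y : ℝ => (‖E (x + y * Complex.I)‖) ^ 2) = g := by
    funext y; rw [hg_def]; exact Complex.sq_norm _
  -- key inequality
  have hkey : ∀ y : ℝ, 0 < y → y < 1 →
      (1 - t) * (y * g y) ≤ (1 + t) * (g y - g (-y)) := by
    intro y hy hy1
    set z : ℂ := (x : ℂ) + (y : ℝ) * Complex.I with hz_def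
    have hzim : 0 < z.im := by simp [hz_def, hy]
    have hconjz : (starRingEnd ℂ) z = (x : ℂ) + ((-y : ℝ) : ℂ) * Complex.I := by
      rw [hz_def]
      simp [map_add, map_mul, Complex.conj_ofReal, Complex.conj_I]
    have hgy : g y = Complex.normSq (E z) := rfl
    have hgny : g (-y) = Complex.normSq (Eh z) := by
      rw [hg_def, hEh_def, Complex.normSq_conj, hconjz]
    -- z is in the ball
    have hzball : z ∈ ball w 1 := by
      rw [mem_ball, Complex.dist_eq, hz_def, hw_def]
      have : (x : ℂ) + (y : ℝ) * Complex.I - ((x : ℂ) + Complex.I)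
          = ((y - 1 : ℝ) : ℂ) * Complex.I := by push_cast; ring
      rw [this, norm_mul, Complex.norm_I, mul_one, Complex.norm_real, Real.norm_eq_abs]
      rw [abs_of_nonpos (by linarith)]
      linarith
    -- Schwarz lemma
    have hS := Complex.dist_le_div_mul_dist_of_mapsTo_ball hFdiff (hFmaps.mono_right ball_subset_closedBall) hzball
    rw [hFw, dist_zero_right, Complex.dist_eq] at hS
    have hdzw : ‖z - w‖ = 1 - y := by
      have : z - w = ((y - 1 : ℝ) : ℂ) * Complex.I := by rw [hz_def, hw_def]; push_cast; ring
      rw [this, norm_mul, Complex.norm_I, mul_one, Complex.norm_real, Real.norm_eq_abs, abs_of_nonpos (by linarith)]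
      ring
    rw [hdzw] at hS
    have hS' : ‖Num z‖ ≤ (1 - y) * ‖Den z‖ := by
      have hDpos := norm_pos_iff.mpr (hDen_ne z hzim)
      rw [hF_def] at hS
      rw [norm_div, div_le_iff₀ hDpos] at hS
      calc ‖Num z‖ ≤ 1 / 1 * (1 - y) * ‖Den z‖ := hS
        _ = (1 - y) * ‖Den z‖ := by ring
    -- squared version
    have hNS : Complex.normSq (Num z) ≤ (1 - y) ^ 2 * Complex.normSq (Den z) := by
      have h1 : ‖Num z‖ ^ 2 ≤ ((1 - y) * ‖Den z‖) ^ 2 :=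
        pow_le_pow_left₀ (norm_nonneg _) hS' 2
      rw [← Complex.sq_norm, ← Complex.sq_norm]
      calc ‖Num z‖ ^ 2 ≤ ((1 - y) * ‖Den z‖) ^ 2 := h1
        _ = (1 - y) ^ 2 * ‖Den z‖ ^ 2 := by ring
    -- lower bound for the denominator
    have hDlow : (1 - t) ^ 2 * Complex.normSq (E z) ≤ Complex.normSq (Den z) := by
      have h1 : (1 - t) * ‖E z‖ ≤ ‖Den z‖ := by
        have h2 : ‖E z‖ - ‖(starRingEnd ℂ) a * Eh z‖
            ≤ ‖Den z‖ := by
          rw [hDen_def]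
          exact norm_sub_norm_le (E z) ((starRingEnd ℂ) a * Eh z)
        have h3 : ‖(starRingEnd ℂ) a * Eh z‖ ≤ t * ‖E z‖ := by
          rw [norm_mul, Complex.norm_conj, ← ht_def]
          exact mul_le_mul_of_nonneg_left (hdB z hzim).le ht0
        nlinarith [norm_nonneg (E z)]
      have h4 : 0 ≤ (1 - t) * ‖E z‖ :=
        mul_nonneg (by linarith) (norm_nonneg _)
      have h5 := pow_le_pow_left₀ h4 h1 2
      rw [← Complex.sq_norm, ← Complex.sq_norm]
      calc (1 - t) ^ 2 * ‖E z‖ ^ 2 = ((1 - t) * ‖E z‖) ^ 2 := by ring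
        _ ≤ ‖Den z‖ ^ 2 := h5
    -- combine via the identity
    have hta : Complex.normSq a = t ^ 2 := by rw [← Complex.sq_norm, ht_def]
    have hid : Complex.normSq (Den z) - Complex.normSq (Num z)
        = (1 - t ^ 2) * (Complex.normSq (E z) - Complex.normSq (Eh z)) := by
      simp only [hNum_def, hDen_def]
      rw [normSq_moebius_identity a (E z) (Eh z), hta]
    set S := Complex.normSq (E z) with hS_def
    set Q := Complex.normSq (E z) - Complex.normSq (Eh z) with hQ_def
    have hDq0 : 0 ≤ Complex.normSq (Den z) := Complex.normSq_nonneg _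
    have hS0 : 0 ≤ S := Complex.normSq_nonneg _
    -- (1 - t^2) * Q = Dq - N ≥ (1 - (1-y)^2) Dq ≥ y * Dq ≥ y * (1-t)^2 * S
    have hstep : y * ((1 - t) ^ 2 * S) ≤ (1 - t ^ 2) * Q := by
      nlinarith [mul_nonneg (mul_nonneg hy.le (by linarith : (0:ℝ) ≤ 1 - y)) hDq0,
        mul_le_mul_of_nonneg_left hDlow hy.le]
    have hgQ : g y - g (-y) = Q := by rw [hgy, hgny, hQ_def]
    rw [hgQ, hgy]
    nlinarith [hstep, mul_pos (sub_pos.mpr ht1) (mul_pos hy (lt_of_lt_of_le zero_lt_one (le_refl 1)))]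
  -- differentiability of g
  have hl : Differentiable ℝ (fun y : ℝ => (x : ℂ) + (y : ℝ) * Complex.I) := by
    apply Differentiable.const_add
    exact Complex.ofRealCLM.differentiable.mul_const Complex.I
  have hf : Differentiable ℝ (fun y : ℝ => E ((x : ℂ) + (y : ℝ) * Complex.I)) :=
    (hE.restrictScalars ℝ).comp hl
  have hgdiff : Differentiable ℝ g := by
    have h1 : Differentiable ℝ (fun y : ℝ => ‖E ((x : ℂ) + (y : ℝ) * Complex.I)‖ ^ 2) :=
      hf.norm_sq ℂ
    have h2 : g = fun y : ℝ => ‖E ((x : ℂ) + (y : ℝ) * Complex.I)‖ ^ 2 := by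
      funext y
      rw [hg_def, Complex.sq_norm]
    rw [h2]
    exact h1
  set m : ℝ := deriv g 0 with hm_def
  have hm : HasDerivAt g m 0 := (hgdiff 0).hasDerivAt
  have hmneg : HasDerivAt (fun y : ℝ => g (-y)) (m * (-1)) 0 := by
    have h0 : HasDerivAt g m (-0 : ℝ) := by rwa [neg_zero]
    have hneg : HasDerivAt (fun y : ℝ => -y) (-1 : ℝ) 0 := (hasDerivAt_id 0).neg
    exact HasDerivAt.comp 0 h0 hneg
  set q : ℝ → ℝ := fun y => g y - g (-y) with hq_def
  have hq : HasDerivAt q (m - m * (-1)) 0 := hm.sub hmneg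
  have hq0 : q 0 = 0 := by simp [hq_def]
  -- slope limit
  have hslope : Tendsto (fun y : ℝ => (1 + t) * (q y / y)) (𝓝[>] (0 : ℝ))
      (𝓝 ((1 + t) * (m - m * (-1)))) := by
    have h1 : Tendsto (slope q 0) (𝓝[≠] (0 : ℝ)) (𝓝 (m - m * (-1))) :=
      hasDerivAt_iff_tendsto_slope.mp hq
    have h2 : Tendsto (slope q 0) (𝓝[>] (0 : ℝ)) (𝓝 (m - m * (-1))) :=
      h1.mono_left (nhdsWithin_mono 0 (fun y hy => ne_of_gt hy))
    have h3 : Tendsto (fun y : ℝ => q y / y) (𝓝[>] (0 : ℝ)) (𝓝 (m - m * (-1))) := by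
      apply h2.congr'
      filter_upwards [self_mem_nhdsWithin] with y hy
      rw [slope_def_field, hq0]
      simp
    exact h3.const_mul _
  have hgcont : Tendsto (fun y : ℝ => (1 - t) * g y) (𝓝[>] (0 : ℝ)) (𝓝 ((1 - t) * g 0)) := by
    have := ((hgdiff 0).continuousAt.tendsto).mono_left (nhdsWithin_le_nhds (s := Set.Ioi (0:ℝ)))
    exact this.const_mul _
  have hEv : ∀ᶠ y in 𝓝[>] (0 : ℝ), (1 - t) * g y ≤ (1 + t) * (q y / y) := by
    filter_upwards [Ioo_mem_nhdsGT_of_mem (Set.mem_Ico.mpr ⟨le_refl (0:ℝ), zero_lt_one⟩)] with y hy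
    have hk := hkey y hy.1 hy.2
    have hrw : (1 + t) * (q y / y) = ((1 + t) * q y) / y := (mul_div_assoc _ _ _).symm
    rw [hrw, le_div_iff₀ hy.1]
    calc (1 - t) * g y * y = (1 - t) * (y * g y) := by ring
      _ ≤ (1 + t) * (g y - g (-y)) := hk
      _ = (1 + t) * q y := by simp only [hq_def]
  have hfin : (1 - t) * g 0 ≤ (1 + t) * (m - m * (-1)) :=
    le_of_tendsto_of_tendsto hgcont hslope hEv
  have hg0 : 0 < g 0 := by
    have h0 : g 0 = Complex.normSq (E (x : ℂ)) := by
      rw [hg_def]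
      norm_num
    rw [h0]
    exact Complex.normSq_pos.mpr (hnz x)
  rw [hgoal_eq]
  rw [← hm_def]
  nlinarith [hfin, hg0, ht0, ht1]
end
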